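/- Let (Ω, 𝔉, P) be a probability space with a filtration 𝔅₀ ⊆ 𝔅₁ ⊆ … ⊆ 𝔅ₙ, and let X₁, …, Xₙ be real random variables such that each Xᵢ is 𝔅ᵢ-measurable, E[Xᵢ | 𝔅_{i−1}] = 0 almost surely (a martingale difference sequence), and |Xᵢ| ≤ M almost surely for a constant M > 0. Let Vₙ = Σ_{j=1}^n E[Xⱼ² | 𝔅_{j−1}]. Then for any δ ∈ (0, 1/e), with probability at least 1 − δ, |Σ_{i=1}^n Xᵢ| ≤ 4·√(Vₙ · ln(2n/δ)) + 2·M·ln(2n/δ). -/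

import Mathlib

open MeasureTheory Finset Real

set_option linter.unusedSectionVars false
set_option maxHeartbeats 1000000

section helpers
variable {Ω : Type*} {m0 : MeasurableSpace Ω} {μ : Measure Ω} [IsProbabilityMeasure μ]

lemma exp_le_one_add_add_sq {y : ℝ} (hy : y ≤ 1) : Real.exp y ≤ 1 + y + y ^ 2 := by
  rcases le_or_gt y (-1) with h | h
  · have h1 : Real.exp y ≤ 1 := by
      calc Real.exp y ≤ Real.exp 0 := Real.exp_le_exp.mpr (by linarith)
        _ = 1 := Real.exp_zero
    nlinarith
  · have habs : |y| ≤ 1 := abs_le.mpr ⟨h.le, hy⟩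
    have h2 : |Real.exp y - ∑ i ∈ Finset.range 2, y ^ i / i.factorial| ≤ y ^ 2 * (3 / (2 * 2)) := by
      simpa using Real.exp_bound habs (n := 2) (by norm_num)
    have h3 : ∑ i ∈ Finset.range 2, y ^ i / i.factorial = 1 + y := by
      simp [Finset.sum_range_succ]
    rw [h3] at h2
    have := abs_le.mp h2
    nlinarith [sq_nonneg y]

lemma integrable_of_abs_le {f : Ω → ℝ} (hm : AEStronglyMeasurable f μ) {C : ℝ}
    (h : ∀ᵐ ω ∂μ, |f ω| ≤ C) : Integrable f μ :=
  Integrable.mono' (integrable_const C) hm (by filter_upwards [h] with ω hω; simpa using hω)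

lemma condexp_sq_nonneg {m : MeasurableSpace Ω} (f : Ω → ℝ) :
    ∀ᵐ ω ∂μ, 0 ≤ (μ[(fun ω' => (f ω') ^ 2) | m]) ω :=
  condExp_nonneg (ae_of_all _ fun _ => sq_nonneg _)

lemma sq_integrable_of_abs_le {f : Ω → ℝ} {M : ℝ} (hf : AEStronglyMeasurable f μ)
    (h : ∀ᵐ ω ∂μ, |f ω| ≤ M) : Integrable (fun ω' => (f ω') ^ 2) μ := by
  apply integrable_of_abs_le (C := M ^ 2)
    (hf.mul hf |>.congr (by filter_upwards with ω; simp [Pi.mul_apply]; ring))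
  filter_upwards [h] with ω hω
  rw [abs_pow]
  exact pow_le_pow_left₀ (abs_nonneg _) hω 2

lemma condexp_sq_le {m : MeasurableSpace Ω} (hm : m ≤ m0) {f : Ω → ℝ} {M : ℝ}
    (hf : AEStronglyMeasurable[m0] f μ) (h : ∀ᵐ ω ∂μ, |f ω| ≤ M) :
    ∀ᵐ ω ∂μ, (μ[(fun ω' => (f ω') ^ 2) | m]) ω ≤ M ^ 2 := by
  have := condExp_mono (m := m) (sq_integrable_of_abs_le hf h) (integrable_const (M ^ 2))
    (by filter_upwards [h] with ω hω; exact sq_le_sq' (by linarith [abs_le.mp hω]) (abs_le.mp hω).2)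
  filter_upwards [this] with ω h1
  calc _ ≤ (μ[(fun _ => M ^ 2) | m]) ω := h1
    _ = M ^ 2 := by rw [condExp_const hm]

lemma key_exp_integral (𝔅 : Filtration ℕ m0) (X : ℕ → Ω → ℝ) (M : ℝ) (hM : 0 < M)
    (l : ℝ) (hl0 : 0 < l) (hlM : l * M ≤ 1) :
    ∀ n : ℕ, (∀ i ∈ Finset.Icc 1 n, StronglyMeasurable[𝔅 i] (X i)) →
    (∀ i ∈ Finset.Icc 1 n, μ[X i | 𝔅 (i - 1)] =ᵐ[μ] 0) →
    (∀ i ∈ Finset.Icc 1 n, ∀ᵐ ω ∂μ, |X i ω| ≤ M) →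
    ∫ ω, Real.exp (l * ∑ i ∈ Finset.Icc 1 n, X i ω
      - l ^ 2 * ∑ j ∈ Finset.Icc 1 n, (μ[(fun ω' => (X j ω') ^ 2) | 𝔅 (j - 1)]) ω) ∂μ ≤ 1 := by
  intro n
  induction n with
  | zero => intro _ _ _; simp
  | succ n ih =>
    intro hadapted hmds hbdd
    have hsub : ∀ i ∈ Finset.Icc 1 n, i ∈ Finset.Icc 1 (n + 1) := fun i hi =>
      Finset.mem_Icc.mpr ⟨(Finset.mem_Icc.mp hi).1, (Finset.mem_Icc.mp hi).2.trans (Nat.le_succ n)⟩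
    have IH := ih (fun i hi => hadapted i (hsub i hi)) (fun i hi => hmds i (hsub i hi))
      (fun i hi => hbdd i (hsub i hi))
    have hmem : n + 1 ∈ Finset.Icc 1 (n + 1) := Finset.mem_Icc.mpr ⟨Nat.succ_le_succ n.zero_le, le_refl _⟩
    have hGle : 𝔅 n ≤ m0 := 𝔅.le n
    have hXsm : StronglyMeasurable[𝔅 (n + 1)] (X (n + 1)) := hadapted _ hmem
    have hXm : AEStronglyMeasurable (X (n + 1)) μ := (hXsm.mono (𝔅.le _)).aestronglyMeasurable
    have hXbd : ∀ᵐ ω ∂μ, |X (n + 1) ω| ≤ M := hbdd _ hmem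
    have hXint : Integrable (X (n + 1)) μ := integrable_of_abs_le hXm hXbd
    have hX2int : Integrable (fun ω => (X (n + 1) ω) ^ 2) μ := sq_integrable_of_abs_le hXm hXbd
    set W : ℕ → Ω → ℝ := fun j => μ[(fun ω' => (X j ω') ^ 2) | 𝔅 (j - 1)] with hWdef
    set F : Ω → ℝ := fun ω => l * ∑ i ∈ Finset.Icc 1 n, X i ω
      - l ^ 2 * ∑ j ∈ Finset.Icc 1 (n + 1), W j ω with hFdef
    set g : Ω → ℝ := fun ω => Real.exp (l * X (n + 1) ω) with hgdef
    -- strong measurability of F w.r.t. 𝔅 n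
    have hFsm : StronglyMeasurable[𝔅 n] F := by
      apply StronglyMeasurable.sub
      · exact (Finset.stronglyMeasurable_fun_sum _ (fun i hi =>
          (hadapted i (hsub i hi)).mono (𝔅.mono (Finset.mem_Icc.mp hi).2))).const_mul l
      · refine (Finset.stronglyMeasurable_fun_sum _ (fun j hj => ?_)).const_mul (l ^ 2)
        exact stronglyMeasurable_condExp.mono (𝔅.mono (by
          have := (Finset.mem_Icc.mp hj).2; omega))
    have hexpFsm : StronglyMeasurable[𝔅 n] (fun ω => Real.exp (F ω)) :=
      Real.continuous_exp.comp_stronglyMeasurable hFsm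
    -- a.e. bounds
    have hWbd : ∀ᵐ ω ∂μ, ∀ j ∈ Finset.Icc 1 (n + 1), 0 ≤ W j ω ∧ W j ω ≤ M ^ 2 := by
      refine (ae_ball_iff (Finset.Icc 1 (n + 1)).countable_toSet).mpr fun j hj => ?_
      filter_upwards [condexp_sq_nonneg (m := 𝔅 (j - 1)) (μ := μ) (X j),
        condexp_sq_le (𝔅.le (j - 1)) ((hadapted j hj).mono (𝔅.le j)).aestronglyMeasurable
          (hbdd j hj)] with ω h1 h2
      exact ⟨h1, h2⟩
    have hSbd : ∀ᵐ ω ∂μ, |∑ i ∈ Finset.Icc 1 n, X i ω| ≤ n * M := by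
      have : ∀ᵐ ω ∂μ, ∀ i ∈ Finset.Icc 1 n, |X i ω| ≤ M :=
        (ae_ball_iff (Finset.Icc 1 n).countable_toSet).mpr fun i hi => hbdd i (hsub i hi)
      filter_upwards [this] with ω hω
      calc |∑ i ∈ Finset.Icc 1 n, X i ω| ≤ ∑ i ∈ Finset.Icc 1 n, |X i ω| :=
            Finset.abs_sum_le_sum_abs _ _
        _ ≤ ∑ _i ∈ Finset.Icc 1 n, M := Finset.sum_le_sum hω
        _ = n * M := by simp [Nat.card_Icc]
    have hVbd : ∀ᵐ ω ∂μ, 0 ≤ ∑ j ∈ Finset.Icc 1 (n + 1), W j ω ∧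
        ∑ j ∈ Finset.Icc 1 (n + 1), W j ω ≤ (n + 1) * M ^ 2 := by
      filter_upwards [hWbd] with ω hω
      constructor
      · exact Finset.sum_nonneg fun j hj => (hω j hj).1
      · calc ∑ j ∈ Finset.Icc 1 (n + 1), W j ω ≤ ∑ _j ∈ Finset.Icc 1 (n + 1), M ^ 2 :=
              Finset.sum_le_sum fun j hj => (hω j hj).2
          _ = (n + 1) * M ^ 2 := by simp [Nat.card_Icc]
    set C : ℝ := l * (n * M) + l ^ 2 * ((n + 1) * M ^ 2) with hCdef
    have hFbd : ∀ᵐ ω ∂μ, |F ω| ≤ C := by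
      filter_upwards [hSbd, hVbd] with ω h1 h2
      rw [abs_le]
      simp only [hFdef, hCdef]
      obtain ⟨ha, hb⟩ := abs_le.mp h1
      have p1 : l * (∑ i ∈ Finset.Icc 1 n, X i ω) ≤ l * (n * M) :=
        mul_le_mul_of_nonneg_left hb hl0.le
      have p2 : l * (-(n * M)) ≤ l * (∑ i ∈ Finset.Icc 1 n, X i ω) :=
        mul_le_mul_of_nonneg_left ha hl0.le
      have p3 : l ^ 2 * (0 : ℝ) ≤ l ^ 2 * ∑ j ∈ Finset.Icc 1 (n + 1), W j ω :=
        mul_le_mul_of_nonneg_left h2.1 (sq_nonneg l)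
      have p4 : l ^ 2 * ∑ j ∈ Finset.Icc 1 (n + 1), W j ω ≤ l ^ 2 * ((n + 1) * M ^ 2) :=
        mul_le_mul_of_nonneg_left h2.2 (sq_nonneg l)
      constructor <;> [nlinarith; nlinarith]
    -- integrability facts
    have hexpF_bd : ∀ᵐ ω ∂μ, |Real.exp (F ω)| ≤ Real.exp C := by
      filter_upwards [hFbd] with ω h
      rw [abs_of_pos (Real.exp_pos _)]
      exact Real.exp_le_exp.mpr (abs_le.mp h).2
    have hg_bd : ∀ᵐ ω ∂μ, |g ω| ≤ Real.exp (l * M) := by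
      filter_upwards [hXbd] with ω h
      rw [hgdef, abs_of_pos (Real.exp_pos _)]
      exact Real.exp_le_exp.mpr (mul_le_mul_of_nonneg_left ((abs_le.mp h).2) hl0.le)
    have hgsm : AEStronglyMeasurable g μ :=
      (Real.continuous_exp.comp_stronglyMeasurable
        ((hXsm.mono (𝔅.le _)).const_mul l)).aestronglyMeasurable
    have hg_int : Integrable g μ := integrable_of_abs_le hgsm hg_bd
    have hfg_int : Integrable ((fun ω => Real.exp (F ω)) * g) μ := by
      apply integrable_of_abs_le (C := Real.exp C * Real.exp (l * M))
        (((hexpFsm.mono hGle).aestronglyMeasurable).mul hgsm)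
      filter_upwards [hexpF_bd, hg_bd] with ω h1 h2
      rw [Pi.mul_apply, abs_mul]
      exact mul_le_mul h1 h2 (abs_nonneg _) (Real.exp_pos _).le
    -- pull-out property
    have h1 : μ[(fun ω => Real.exp (F ω)) * g | 𝔅 n] =ᵐ[μ]
        (fun ω => Real.exp (F ω)) * μ[g | 𝔅 n] :=
      condExp_mul_of_stronglyMeasurable_left hexpFsm hfg_int hg_int
    -- conditional MGF bound
    have hmds' : μ[X (n + 1) | 𝔅 n] =ᵐ[μ] 0 := by
      have := hmds (n + 1) hmem
      simpa using this
    have h2 : μ[g | 𝔅 n] ≤ᵐ[μ] fun ω => Real.exp (l ^ 2 * W (n + 1) ω) := by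
      have hh_int : Integrable
          ((fun _ => (1 : ℝ)) + l • X (n + 1) + (l ^ 2) • (fun ω => (X (n + 1) ω) ^ 2)) μ :=
        (((integrable_const 1).add (hXint.smul l)).add (hX2int.smul (l ^ 2)))
      have hgh : g ≤ᵐ[μ]
          ((fun _ => (1 : ℝ)) + l • X (n + 1) + (l ^ 2) • (fun ω => (X (n + 1) ω) ^ 2)) := by
        filter_upwards [hXbd] with ω hω
        have hy : l * X (n + 1) ω ≤ 1 := by
          calc l * X (n + 1) ω ≤ l * M :=
            mul_le_mul_of_nonneg_left ((abs_le.mp hω).2) hl0.le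
          _ ≤ 1 := hlM
        calc g ω ≤ 1 + l * X (n + 1) ω + (l * X (n + 1) ω) ^ 2 := exp_le_one_add_add_sq hy
          _ = (((fun _ => (1 : ℝ)) + l • X (n + 1)
              + (l ^ 2) • (fun ω => (X (n + 1) ω) ^ 2) : Ω → ℝ)) ω := by
            simp only [Pi.add_apply, Pi.smul_apply, smul_eq_mul]
            ring
      have hmono := condExp_mono (m := 𝔅 n) hg_int hh_int hgh
      have hch : μ[((fun _ => (1 : ℝ)) + l • X (n + 1)
          + (l ^ 2) • (fun ω => (X (n + 1) ω) ^ 2)) | 𝔅 n] =ᵐ[μ]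
          fun ω => 1 + l ^ 2 * W (n + 1) ω := by
        have e1 := condExp_add (μ := μ) (m := 𝔅 n) ((integrable_const (1:ℝ)).add (hXint.smul l))
          (hX2int.smul (l ^ 2))
        have e2 := condExp_add (μ := μ) (m := 𝔅 n) (integrable_const (1:ℝ)) (hXint.smul l)
        have e3 := condExp_smul (μ := μ) (m := 𝔅 n) l (X (n + 1))
        have e4 := condExp_smul (μ := μ) (m := 𝔅 n) (l ^ 2) (fun ω => (X (n + 1) ω) ^ 2)
        have e5 : μ[(fun _ => (1:ℝ)) | 𝔅 n] = fun _ => (1:ℝ) := condExp_const hGle 1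
        have hW1 : W (n + 1) = μ[(fun ω' => (X (n + 1) ω') ^ 2) | 𝔅 n] := by
          rw [hWdef]; simp
        filter_upwards [e1, e2, e3, e4, hmds'] with ω a1 a2 a3 a4 a5
        rw [a1, Pi.add_apply, a2, Pi.add_apply, a3, a4]
        rw [show (μ[(fun _ => (1:ℝ)) | 𝔅 n]) ω = 1 from congrFun e5 ω]
        simp only [Pi.smul_apply, smul_eq_mul, Pi.zero_apply] at a5 ⊢
        rw [a5, hW1]
        ring
      filter_upwards [hmono, hch] with ω hm1 hm2
      calc (μ[g | 𝔅 n]) ω ≤ _ := hm1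
        _ = 1 + l ^ 2 * W (n + 1) ω := hm2
        _ ≤ Real.exp (l ^ 2 * W (n + 1) ω) := by
            have := Real.add_one_le_exp (l ^ 2 * W (n + 1) ω); linarith
    -- condexp of g bounds for integrability
    have hcg_bd : ∀ᵐ ω ∂μ, 0 ≤ (μ[g | 𝔅 n]) ω ∧ (μ[g | 𝔅 n]) ω ≤ Real.exp (l * M) := by
      have hnn := condExp_nonneg (m := 𝔅 n) (μ := μ)
        (ae_of_all _ fun ω => (Real.exp_pos (l * X (n + 1) ω)).le : 0 ≤ᵐ[μ] g)
      have hub := condExp_mono (m := 𝔅 n) hg_int (integrable_const (Real.exp (l * M)))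
        (by filter_upwards [hg_bd] with ω h; exact (abs_le.mp h).2)
      filter_upwards [hnn, hub] with ω a1 a2
      exact ⟨a1, by rwa [condExp_const hGle] at a2⟩
    have hint2 : Integrable ((fun ω => Real.exp (F ω)) * μ[g | 𝔅 n]) μ := by
      apply integrable_of_abs_le (C := Real.exp C * Real.exp (l * M))
        (((hexpFsm.mono hGle).aestronglyMeasurable).mul
          ((stronglyMeasurable_condExp.mono hGle).aestronglyMeasurable))
      filter_upwards [hexpF_bd, hcg_bd] with ω a1 a2
      rw [Pi.mul_apply, abs_mul]
      exact mul_le_mul a1 (by rw [abs_of_nonneg a2.1]; exact a2.2) (abs_nonneg _) (Real.exp_pos _).le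
    have hint3 : Integrable (fun ω => Real.exp (F ω) * Real.exp (l ^ 2 * W (n + 1) ω)) μ := by
      have hmeas : AEStronglyMeasurable
          (fun ω => Real.exp (F ω) * Real.exp (l ^ 2 * W (n + 1) ω)) μ := by
        apply AEStronglyMeasurable.mul ((hexpFsm.mono hGle).aestronglyMeasurable)
        exact (Real.continuous_exp.comp_stronglyMeasurable
          ((stronglyMeasurable_condExp.mono (𝔅.le _)).const_mul (l ^ 2))).aestronglyMeasurable
      apply integrable_of_abs_le (C := Real.exp C * Real.exp (l ^ 2 * M ^ 2)) hmeas
      · filter_upwards [hexpF_bd, hWbd] with ω a1 a2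
        rw [abs_mul]
        refine mul_le_mul a1 ?_ (abs_nonneg _) (Real.exp_pos _).le
        rw [abs_of_pos (Real.exp_pos _)]
        refine Real.exp_le_exp.mpr (mul_le_mul_of_nonneg_left ?_ (sq_nonneg l))
        exact (a2 (n + 1) hmem).2
    -- the chain
    have goal_eq : (fun ω => Real.exp (l * ∑ i ∈ Finset.Icc 1 (n + 1), X i ω
        - l ^ 2 * ∑ j ∈ Finset.Icc 1 (n + 1), W j ω)) = (fun ω => Real.exp (F ω)) * g := by
      funext ω
      simp only [Pi.mul_apply, hFdef, hgdef, ← Real.exp_add]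
      rw [Finset.sum_Icc_succ_top (Nat.succ_le_succ n.zero_le) (fun i => X i ω)]
      ring_nf
    have step_eq : (fun ω => Real.exp (F ω) * Real.exp (l ^ 2 * W (n + 1) ω)) =
        fun ω => Real.exp (l * ∑ i ∈ Finset.Icc 1 n, X i ω
          - l ^ 2 * ∑ j ∈ Finset.Icc 1 n, W j ω) := by
      funext ω
      simp only [← Real.exp_add, hFdef]
      rw [Finset.sum_Icc_succ_top (Nat.succ_le_succ n.zero_le) (fun j => W j ω)]
      ring_nf
    calc ∫ ω, Real.exp (l * ∑ i ∈ Finset.Icc 1 (n + 1), X i ω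
          - l ^ 2 * ∑ j ∈ Finset.Icc 1 (n + 1), W j ω) ∂μ
        = ∫ ω, ((fun ω => Real.exp (F ω)) * g) ω ∂μ := by rw [← goal_eq]
      _ = ∫ ω, (μ[(fun ω => Real.exp (F ω)) * g | 𝔅 n]) ω ∂μ :=
          (integral_condExp hGle).symm
      _ = ∫ ω, ((fun ω => Real.exp (F ω)) * μ[g | 𝔅 n]) ω ∂μ := integral_congr_ae h1
      _ ≤ ∫ ω, Real.exp (F ω) * Real.exp (l ^ 2 * W (n + 1) ω) ∂μ := by
          refine integral_mono_ae hint2 hint3 ?_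
          filter_upwards [h2] with ω hω
          exact mul_le_mul_of_nonneg_left hω (Real.exp_pos _).le
      _ = ∫ ω, Real.exp (l * ∑ i ∈ Finset.Icc 1 n, X i ω
          - l ^ 2 * ∑ j ∈ Finset.Icc 1 n, W j ω) ∂μ := by rw [step_eq]
      _ ≤ 1 := IH

end helpers



lemma scale_algebra {b S V L : ℝ} (hb : 0 < b) (h : 1 / b * S - (1 / b) ^ 2 * V < L) :
    S < L * b + V / b := by
  have e : (1 / b * S - (1 / b) ^ 2 * V) * b ^ 2 = S * b - V := by
    field_simp
  have h2 : S * b - V < L * b ^ 2 := by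
    calc S * b - V = (1 / b * S - (1 / b) ^ 2 * V) * b ^ 2 := e.symm
      _ < L * b ^ 2 := by
        apply mul_lt_mul_of_pos_right h (by positivity)
  have h3 : S * b < L * b ^ 2 + V := by linarith
  calc S = S * b / b := by field_simp
    _ < (L * b ^ 2 + V) / b := by apply div_lt_div_of_pos_right h3 hb
    _ = L * b + V / b := by field_simp



lemma freedman_exists_scale (n : ℕ) (hn : 1 ≤ n) (M L V : ℝ) (hL : 1 ≤ L)
    (hVn : V ≤ n * M ^ 2) : V ≤ 4 ^ ((n - 1) + 1) * M ^ 2 * L := by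
  have h1 : (n : ℝ) ≤ 4 ^ (n - 1) := by
    have := Nat.lt_pow_self (show 1 < 4 by norm_num) (n := n - 1)
    have h2 : n ≤ 4 ^ (n - 1) := by omega
    exact_mod_cast h2
  have h3 : (4 : ℝ) ^ (n - 1) ≤ 4 ^ ((n - 1) + 1) :=
    pow_le_pow_right₀ (by norm_num) (Nat.le_succ _)
  have e1 : (n : ℝ) * M ^ 2 ≤ 4 ^ (n - 1) * M ^ 2 :=
    mul_le_mul_of_nonneg_right h1 (sq_nonneg M)
  have e2 : (4 : ℝ) ^ (n - 1) * M ^ 2 ≤ 4 ^ ((n - 1) + 1) * M ^ 2 :=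
    mul_le_mul_of_nonneg_right h3 (sq_nonneg M)
  have e3 : (4 : ℝ) ^ ((n - 1) + 1) * M ^ 2 ≤ 4 ^ ((n - 1) + 1) * M ^ 2 * L :=
    le_mul_of_one_le_right (by positivity) hL
  linarith

lemma freedman_arith (n : ℕ) (hn : 1 ≤ n) (M L V S : ℝ) (hM : 0 < M) (hL : 1 ≤ L)
    (hV0 : 0 ≤ V) (hVn : V ≤ n * M ^ 2)
    (h : ∀ j : ℕ, j < n → S < L * (2 ^ j * M) + V / (2 ^ j * M)) :
    S ≤ 4 * Real.sqrt (V * L) + 2 * M * L := by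
  have hR0 : 0 ≤ Real.sqrt (V * L) := Real.sqrt_nonneg _
  have hR2 : Real.sqrt (V * L) ^ 2 = V * L := Real.sq_sqrt (mul_nonneg hV0 (by linarith))
  rcases le_or_gt V (M ^ 2 * L) with hcase | hcase
  · -- small variance: use j = 0
    have h0 := h 0 hn
    simp only [pow_zero, one_mul] at h0
    have : V / M ≤ M * L := by
      rw [div_le_iff₀ hM]
      nlinarith
    nlinarith
  · -- large variance: find the right scale
    have hex : ∃ j : ℕ, V ≤ 4 ^ (j + 1) * M ^ 2 * L :=
      ⟨n - 1, freedman_exists_scale n hn M L V hL hVn⟩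
    classical
    set j := Nat.find hex with hjdef
    have hj : V ≤ 4 ^ (j + 1) * M ^ 2 * L := Nat.find_spec hex
    have hjlow : 4 ^ j * M ^ 2 * L < V := by
      rcases Nat.eq_zero_or_pos j with h0 | h0
      · rw [h0]; simpa using hcase
      · have := Nat.find_min hex (show j - 1 < j by omega)
        push_neg at this
        have hco : j - 1 + 1 = j := by omega
        rwa [hco] at this
    have hjn : j < n := by
      have : j ≤ n - 1 := Nat.find_le (freedman_exists_scale n hn M L V hL hVn)
      omega
    set B : ℝ := 2 ^ j * M with hBdef
    have hB0 : 0 < B := by positivity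
    have hB2 : B ^ 2 = 4 ^ j * M ^ 2 := by
      rw [hBdef, mul_pow, ← pow_mul, mul_comm j 2, pow_mul]
      norm_num
    have hSj : S < L * B + V / B := h j hjn
    have hL0 : (0:ℝ) < L := by linarith
    -- L * B ≤ sqrt (V * L)
    have hLB : L * B ≤ Real.sqrt (V * L) := by
      rw [← Real.sqrt_sq (by positivity : (0:ℝ) ≤ L * B)]
      apply Real.sqrt_le_sqrt
      have e : (L * B) ^ 2 = L * (4 ^ j * M ^ 2 * L) := by rw [mul_pow, hB2]; ring
      rw [e]
      nlinarith [mul_le_mul_of_nonneg_left hjlow.le hL0.le]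
    -- V / B ≤ 2 * sqrt (V * L)
    have hVB : V / B ≤ 2 * Real.sqrt (V * L) := by
      rw [div_le_iff₀ hB0]
      have h4 : V ≤ 4 * B ^ 2 * L := by
        rw [hB2]
        calc V ≤ 4 ^ (j + 1) * M ^ 2 * L := hj
          _ = 4 * (4 ^ j * M ^ 2) * L := by rw [pow_succ]; ring
      have hsq : V ^ 2 ≤ (2 * Real.sqrt (V * L) * B) ^ 2 := by
        have e : (2 * Real.sqrt (V * L) * B) ^ 2 = 4 * (V * L) * B ^ 2 := by
          rw [mul_pow, mul_pow, hR2]; ring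
        rw [e]
        nlinarith [mul_le_mul_of_nonneg_left h4 hV0]
      calc V = Real.sqrt (V ^ 2) := (Real.sqrt_sq hV0).symm
        _ ≤ Real.sqrt ((2 * Real.sqrt (V * L) * B) ^ 2) := Real.sqrt_le_sqrt hsq
        _ = 2 * Real.sqrt (V * L) * B := Real.sqrt_sq (by positivity)
    have hML : (0:ℝ) ≤ M * L := by positivity
    linarith

section tailsec
variable {Ω : Type*} {m0 : MeasurableSpace Ω} {μ : Measure Ω} [IsProbabilityMeasure μ]

lemma tail_bound (𝔅 : Filtration ℕ m0) (X : ℕ → Ω → ℝ) (M : ℝ) (hM : 0 < M)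
    (n : ℕ) (hadapted : ∀ i ∈ Finset.Icc 1 n, StronglyMeasurable[𝔅 i] (X i))
    (hmds : ∀ i ∈ Finset.Icc 1 n, μ[X i | 𝔅 (i - 1)] =ᵐ[μ] 0)
    (hbdd : ∀ i ∈ Finset.Icc 1 n, ∀ᵐ ω ∂μ, |X i ω| ≤ M)
    (l : ℝ) (hl0 : 0 < l) (hlM : l * M ≤ 1) (L : ℝ) :
    μ {ω | L ≤ l * (∑ i ∈ Finset.Icc 1 n, X i ω)
        - l ^ 2 * ∑ j ∈ Finset.Icc 1 n, (μ[(fun ω' => (X j ω') ^ 2) | 𝔅 (j - 1)]) ω}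
      ≤ ENNReal.ofReal (Real.exp (-L)) := by
  set W : ℕ → Ω → ℝ := fun j => μ[(fun ω' => (X j ω') ^ 2) | 𝔅 (j - 1)] with hWdef
  set Z : Ω → ℝ := fun ω => Real.exp (l * (∑ i ∈ Finset.Icc 1 n, X i ω)
    - l ^ 2 * ∑ j ∈ Finset.Icc 1 n, W j ω) with hZdef
  -- measurability
  have hSm : AEStronglyMeasurable (fun ω => ∑ i ∈ Finset.Icc 1 n, X i ω) μ :=
    (Finset.stronglyMeasurable_fun_sum _ (fun i hi =>
      (hadapted i hi).mono (𝔅.le i))).aestronglyMeasurable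
  have hVm : AEStronglyMeasurable (fun ω => ∑ j ∈ Finset.Icc 1 n, W j ω) μ :=
    (Finset.stronglyMeasurable_fun_sum _ (fun j _ =>
      stronglyMeasurable_condExp.mono (𝔅.le (j - 1)))).aestronglyMeasurable
  have hZm : AEStronglyMeasurable Z μ := by
    have : AEStronglyMeasurable (fun ω => l * (∑ i ∈ Finset.Icc 1 n, X i ω)
        - l ^ 2 * ∑ j ∈ Finset.Icc 1 n, W j ω) μ :=
      (hSm.const_mul l).sub (hVm.const_mul (l ^ 2))
    exact (Real.continuous_exp.comp_aestronglyMeasurable this)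
  -- bounds
  have hSbd : ∀ᵐ ω ∂μ, |∑ i ∈ Finset.Icc 1 n, X i ω| ≤ n * M := by
    have : ∀ᵐ ω ∂μ, ∀ i ∈ Finset.Icc 1 n, |X i ω| ≤ M :=
      (ae_ball_iff (Finset.Icc 1 n).countable_toSet).mpr fun i hi => hbdd i hi
    filter_upwards [this] with ω hω
    calc |∑ i ∈ Finset.Icc 1 n, X i ω| ≤ ∑ i ∈ Finset.Icc 1 n, |X i ω| :=
          Finset.abs_sum_le_sum_abs _ _
      _ ≤ ∑ _i ∈ Finset.Icc 1 n, M := Finset.sum_le_sum hω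
      _ = n * M := by simp [Nat.card_Icc]
  have hVbd : ∀ᵐ ω ∂μ, 0 ≤ ∑ j ∈ Finset.Icc 1 n, W j ω ∧
      ∑ j ∈ Finset.Icc 1 n, W j ω ≤ n * M ^ 2 := by
    have hWbd : ∀ᵐ ω ∂μ, ∀ j ∈ Finset.Icc 1 n, 0 ≤ W j ω ∧ W j ω ≤ M ^ 2 := by
      refine (ae_ball_iff (Finset.Icc 1 n).countable_toSet).mpr fun j hj => ?_
      filter_upwards [condexp_sq_nonneg (m := 𝔅 (j - 1)) (μ := μ) (X j),
        condexp_sq_le (𝔅.le (j - 1)) ((hadapted j hj).mono (𝔅.le j)).aestronglyMeasurable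
          (hbdd j hj)] with ω h1 h2
      exact ⟨h1, h2⟩
    filter_upwards [hWbd] with ω hω
    refine ⟨Finset.sum_nonneg fun j hj => (hω j hj).1, ?_⟩
    calc ∑ j ∈ Finset.Icc 1 n, W j ω ≤ ∑ _j ∈ Finset.Icc 1 n, M ^ 2 :=
          Finset.sum_le_sum fun j hj => (hω j hj).2
      _ = n * M ^ 2 := by simp [Nat.card_Icc]
  have hZbd : ∀ᵐ ω ∂μ, |Z ω| ≤ Real.exp (l * (n * M)) := by
    filter_upwards [hSbd, hVbd] with ω h1 h2
    rw [hZdef, abs_of_pos (Real.exp_pos _)]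
    apply Real.exp_le_exp.mpr
    have := mul_le_mul_of_nonneg_left (abs_le.mp h1).2 hl0.le
    nlinarith [mul_le_mul_of_nonneg_left h2.1 (sq_nonneg l)]
  have hZint : Integrable Z μ := integrable_of_abs_le hZm hZbd
  have hint : ∫ ω, Z ω ∂μ ≤ 1 := key_exp_integral 𝔅 X M hM l hl0 hlM n hadapted hmds hbdd
  -- Markov
  have hset : {ω | L ≤ l * (∑ i ∈ Finset.Icc 1 n, X i ω)
      - l ^ 2 * ∑ j ∈ Finset.Icc 1 n, W j ω} = {ω | Real.exp L ≤ Z ω} := by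
    ext ω; simp only [Set.mem_setOf_eq, hZdef, Real.exp_le_exp]
  have hmarkov := mul_meas_ge_le_integral_of_nonneg
    (ae_of_all μ fun ω => (Real.exp_pos (l * (∑ i ∈ Finset.Icc 1 n, X i ω)
      - l ^ 2 * ∑ j ∈ Finset.Icc 1 n, W j ω)).le : 0 ≤ᵐ[μ] Z) hZint (Real.exp L)
  rw [hset]
  have htoReal : (μ {ω | Real.exp L ≤ Z ω}).toReal ≤ Real.exp (-L) := by
    have h1 : Real.exp L * (μ {ω | Real.exp L ≤ Z ω}).toReal ≤ 1 := le_trans hmarkov hint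
    rw [Real.exp_neg,
      ← mul_le_mul_iff_right₀ (Real.exp_pos L), mul_inv_cancel₀ (Real.exp_pos L).ne']
    exact h1
  calc μ {ω | Real.exp L ≤ Z ω}
      = ENNReal.ofReal ((μ {ω | Real.exp L ≤ Z ω}).toReal) :=
        (ENNReal.ofReal_toReal (measure_ne_top μ _)).symm
    _ ≤ ENNReal.ofReal (Real.exp (-L)) := ENNReal.ofReal_le_ofReal htoReal

end tailsec

/-- Freedman-style inequality for martingale difference sequences
(Lemma 2 of Bartlett et al., as used in the paper). -/
theorem freedman_martingale_difference_concentration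
    {Ω : Type*} {m0 : MeasurableSpace Ω} {μ : Measure Ω} [IsProbabilityMeasure μ]
    (n : ℕ) (𝔅 : Filtration ℕ m0) (X : ℕ → Ω → ℝ) (M : ℝ) (hM : 0 < M)
    (hadapted : ∀ i ∈ Finset.Icc 1 n, StronglyMeasurable[𝔅 i] (X i))
    (hmds : ∀ i ∈ Finset.Icc 1 n, μ[X i | 𝔅 (i - 1)] =ᵐ[μ] 0)
    (hbdd : ∀ i ∈ Finset.Icc 1 n, ∀ᵐ ω ∂μ, |X i ω| ≤ M)
    (δ : ℝ) (hδ : δ ∈ Set.Ioo (0 : ℝ) (1 / Real.exp 1)) :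
    ENNReal.ofReal (1 - δ) ≤
      μ {ω | |∑ i ∈ Finset.Icc 1 n, X i ω| ≤
        4 * Real.sqrt ((∑ j ∈ Finset.Icc 1 n,
            (μ[(fun ω' => (X j ω') ^ 2) | 𝔅 (j - 1)]) ω) * Real.log (2 * n / δ))
          + 2 * M * Real.log (2 * n / δ)} := by
  obtain ⟨hδ0, hδe⟩ := hδ
  have hδ1 : δ < 1 := by
    have h1 : 1 / Real.exp 1 < 1 := by
      rw [div_lt_one (Real.exp_pos 1)]
      have := Real.add_one_le_exp 1; linarith
    linarith
  rcases Nat.eq_zero_or_pos n with hn0 | hn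
  · subst hn0
    have hset : {ω : Ω | |∑ i ∈ Finset.Icc 1 0, X i ω| ≤
        4 * Real.sqrt ((∑ j ∈ Finset.Icc 1 0,
            (μ[(fun ω' => (X j ω') ^ 2) | 𝔅 (j - 1)]) ω) * Real.log (2 * (0:ℕ) / δ))
          + 2 * M * Real.log (2 * (0:ℕ) / δ)} = Set.univ := by
      apply Set.eq_univ_iff_forall.mpr
      intro ω
      simp [Real.log_zero]
    rw [hset, measure_univ]
    exact ENNReal.ofReal_le_one.mpr (by linarith)
  -- main case
  have hn1 : (1:ℝ) ≤ n := by exact_mod_cast hn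
  set L : ℝ := Real.log (2 * n / δ) with hLdef
  set S : Ω → ℝ := fun ω => ∑ i ∈ Finset.Icc 1 n, X i ω with hSdef
  set V : Ω → ℝ := fun ω => ∑ j ∈ Finset.Icc 1 n,
    (μ[(fun ω' => (X j ω') ^ 2) | 𝔅 (j - 1)]) ω with hVdef
  have h2n : (0:ℝ) < 2 * n / δ := by positivity
  have hL1 : 1 ≤ L := by
    rw [hLdef, Real.le_log_iff_exp_le h2n]
    rw [le_div_iff₀ hδ0]
    have h1 : δ * Real.exp 1 < 1 := (lt_div_iff₀ (Real.exp_pos 1)).mp hδe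
    have h2 : Real.exp 1 * δ = δ * Real.exp 1 := mul_comm _ _
    linarith
  set l : ℕ → ℝ := fun j => 1 / (2 ^ j * M) with hldef
  have hl0 : ∀ j, 0 < l j := fun j => by positivity
  have hlM : ∀ j, l j * M ≤ 1 := by
    intro j
    rw [hldef]
    have h2j : (1:ℝ) ≤ 2 ^ j := one_le_pow₀ (by norm_num)
    rw [div_mul_eq_mul_div, one_mul, div_le_one (by positivity)]
    nlinarith
  -- positive-side bad sets
  set A : ℕ → Set Ω := fun j => {ω | L ≤ l j * S ω - (l j) ^ 2 * V ω} with hAdef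
  set An : ℕ → Set Ω := fun j => {ω | L ≤ l j * (-S ω) - (l j) ^ 2 * V ω} with hAndef
  have hAbd : ∀ j, μ (A j) ≤ ENNReal.ofReal (Real.exp (-L)) := fun j =>
    tail_bound 𝔅 X M hM n hadapted hmds hbdd (l j) (hl0 j) (hlM j) L
  have hAnbd : ∀ j, μ (An j) ≤ ENNReal.ofReal (Real.exp (-L)) := by
    intro j
    have hadn : ∀ i ∈ Finset.Icc 1 n, StronglyMeasurable[𝔅 i] (-(X i)) :=
      fun i hi => (hadapted i hi).neg
    have hmdsn : ∀ i ∈ Finset.Icc 1 n, μ[-(X i) | 𝔅 (i - 1)] =ᵐ[μ] 0 := by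
      intro i hi
      refine (condExp_neg (X i) _).trans ?_
      filter_upwards [hmds i hi] with ω h
      simp only [Pi.neg_apply, Pi.zero_apply] at h ⊢
      simp [h]
    have hbddn : ∀ i ∈ Finset.Icc 1 n, ∀ᵐ ω ∂μ, |(-(X i)) ω| ≤ M := by
      intro i hi
      filter_upwards [hbdd i hi] with ω h
      simpa using h
    have := tail_bound 𝔅 (fun i => -(X i)) M hM n hadn hmdsn hbddn (l j) (hl0 j) (hlM j) L
    have hseteq : {ω | L ≤ l j * (∑ i ∈ Finset.Icc 1 n, (-(X i)) ω)
        - (l j) ^ 2 * ∑ j' ∈ Finset.Icc 1 n,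
          (μ[(fun ω' => ((-(X j')) ω') ^ 2) | 𝔅 (j' - 1)]) ω} = An j := by
      ext ω
      simp only [Set.mem_setOf_eq, hAndef, hSdef, hVdef, Pi.neg_apply, neg_sq,
        Finset.sum_neg_distrib]
    rwa [hseteq] at this
  -- measurability
  have hSmeas : Measurable S := by
    rw [hSdef]
    exact (Finset.stronglyMeasurable_fun_sum _ fun i hi =>
      (hadapted i hi).mono (𝔅.le i)).measurable
  have hVmeas : Measurable V := by
    rw [hVdef]
    exact (Finset.stronglyMeasurable_fun_sum _ fun j _ =>
      stronglyMeasurable_condExp.mono (𝔅.le (j - 1))).measurable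
  have hAmeas : ∀ j, MeasurableSet (A j) := fun j =>
    measurableSet_le measurable_const ((hSmeas.const_mul (l j)).sub (hVmeas.const_mul ((l j) ^ 2)))
  have hAnmeas : ∀ j, MeasurableSet (An j) := fun j =>
    measurableSet_le measurable_const
      ((hSmeas.neg.const_mul (l j)).sub (hVmeas.const_mul ((l j) ^ 2)))
  set bad : Set Ω := ⋃ j ∈ Finset.range n, (A j ∪ An j) with hbaddef
  have hbadmeas : MeasurableSet bad :=
    Finset.measurableSet_biUnion _ fun j _ => (hAmeas j).union (hAnmeas j)
  have hexpL : Real.exp (-L) = δ / (2 * n) := by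
    rw [hLdef, Real.exp_neg, Real.exp_log h2n, inv_div]
  have hbadbd : μ bad ≤ ENNReal.ofReal δ := by
    calc μ bad ≤ ∑ j ∈ Finset.range n, μ (A j ∪ An j) := measure_biUnion_finset_le _ _
      _ ≤ ∑ j ∈ Finset.range n, (ENNReal.ofReal (Real.exp (-L)) + ENNReal.ofReal (Real.exp (-L))) := by
          apply Finset.sum_le_sum
          intro j _
          exact le_trans (measure_union_le _ _) (add_le_add (hAbd j) (hAnbd j))
      _ = n * (2 * ENNReal.ofReal (δ / (2 * n))) := by
          rw [Finset.sum_const, Finset.card_range, hexpL, nsmul_eq_mul]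
          ring
      _ = ENNReal.ofReal δ := by
          rw [show ((n : ENNReal)) = ENNReal.ofReal (n:ℝ) by simp,
            show ((2 : ENNReal)) = ENNReal.ofReal 2 by simp [ENNReal.ofReal_ofNat],
            ← ENNReal.ofReal_mul (by norm_num), ← ENNReal.ofReal_mul (by positivity)]
          congr 1
          field_simp
  -- complement bound
  have hcompl : ENNReal.ofReal (1 - δ) ≤ μ badᶜ := by
    rw [prob_compl_eq_one_sub hbadmeas]
    calc ENNReal.ofReal (1 - δ) = 1 - ENNReal.ofReal δ := by
          rw [ENNReal.ofReal_sub _ hδ0.le, ENNReal.ofReal_one]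
      _ ≤ 1 - μ bad := tsub_le_tsub_left hbadbd 1
  refine le_trans hcompl (measure_mono_ae ?_)
  -- a.e. inclusion of badᶜ in the target event
  have hVbd : ∀ᵐ ω ∂μ, 0 ≤ V ω ∧ V ω ≤ n * M ^ 2 := by
    have hWbd : ∀ᵐ ω ∂μ, ∀ j ∈ Finset.Icc 1 n,
        0 ≤ (μ[(fun ω' => (X j ω') ^ 2) | 𝔅 (j - 1)]) ω ∧
        (μ[(fun ω' => (X j ω') ^ 2) | 𝔅 (j - 1)]) ω ≤ M ^ 2 := by
      refine (ae_ball_iff (Finset.Icc 1 n).countable_toSet).mpr fun j hj => ?_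
      filter_upwards [condexp_sq_nonneg (m := 𝔅 (j - 1)) (μ := μ) (X j),
        condexp_sq_le (𝔅.le (j - 1)) ((hadapted j hj).mono (𝔅.le j)).aestronglyMeasurable
          (hbdd j hj)] with ω h1 h2
      exact ⟨h1, h2⟩
    filter_upwards [hWbd] with ω hω
    refine ⟨Finset.sum_nonneg fun j hj => (hω j hj).1, ?_⟩
    calc V ω ≤ ∑ _j ∈ Finset.Icc 1 n, M ^ 2 := Finset.sum_le_sum fun j hj => (hω j hj).2
      _ = n * M ^ 2 := by simp [Nat.card_Icc]
  filter_upwards [hVbd] with ω hV hmem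
  have hkey : ∀ j : ℕ, j < n → (ω ∉ A j ∧ ω ∉ An j) := by
    intro j hj
    refine ⟨fun hc => hmem ?_, fun hc => hmem ?_⟩
    · exact Set.mem_biUnion (Finset.mem_range.mpr hj) (Set.mem_union_left _ hc)
    · exact Set.mem_biUnion (Finset.mem_range.mpr hj) (Set.mem_union_right _ hc)
  have hs : ∀ j : ℕ, j < n → S ω < L * (2 ^ j * M) + V ω / (2 ^ j * M) := by
    intro j hj
    have h1 := (hkey j hj).1
    rw [hAdef, Set.mem_setOf_eq, not_le] at h1
    exact scale_algebra (by positivity) (by rw [hldef] at h1; exact h1)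
  have hsneg : ∀ j : ℕ, j < n → -S ω < L * (2 ^ j * M) + V ω / (2 ^ j * M) := by
    intro j hj
    have h1 := (hkey j hj).2
    rw [hAndef, Set.mem_setOf_eq, not_le] at h1
    exact scale_algebra (by positivity) (by rw [hldef] at h1; exact h1)
  have hpos := freedman_arith n hn M L (V ω) (S ω) hM hL1 hV.1 hV.2 hs
  have hneg := freedman_arith n hn M L (V ω) (-S ω) hM hL1 hV.1 hV.2 hsneg
  show |S ω| ≤ 4 * Real.sqrt (V ω * L) + 2 * M * L
  exact abs_le.mpr ⟨by linarith, hpos⟩
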